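/- Let A, B ∈ M₂(ℂ). The linear map on the space sl₂(ℂ) of traceless 2×2 complex matrices given by ξ ↦ AξB − (tr(AξB)/2)·I is a well-defined endomorphism of sl₂(ℂ), and its trace (as an endomorphism of the 3-dimensional space sl₂(ℂ)) equals tr(A)·tr(B) − ½·tr(AB). -/

import Mathlib

/-- `sl₂(ℂ)`: the space of traceless `2×2` complex matrices, as a submodule of `M₂(ℂ)`. -/
noncomputable def sl2 : Submodule ℂ (Matrix (Fin 2) (Fin 2) ℂ) where
  carrier := {X | X.trace = 0}
  add_mem' := by
    intro a b ha hb
    simp only [Set.mem_setOf_eq] at *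
    simp [Matrix.trace_add, ha, hb]
  zero_mem' := by simp
  smul_mem' := by
    intro c a ha
    simp only [Set.mem_setOf_eq] at *
    simp [Matrix.trace_smul, ha]

/-- For `A, B ∈ M₂(ℂ)`, the endomorphism of `sl₂(ℂ)` given by
`ξ ↦ AξB − (tr(AξB)/2)·I` (the traceless part of `AξB`).  That it lands in `sl₂(ℂ)` and is
linear is part of the definition (well-definedness). -/
noncomputable def tracelessConj (A B : Matrix (Fin 2) (Fin 2) ℂ) : sl2 →ₗ[ℂ] sl2 where
  toFun ξ := ⟨A * ξ.1 * B - ((A * ξ.1 * B).trace / 2) • (1 : Matrix (Fin 2) (Fin 2) ℂ), by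
    show Matrix.trace _ = 0
    simp [Matrix.trace_sub, Matrix.trace_smul, Matrix.trace_one]⟩
  map_add' := by
    intro a b
    apply Subtype.ext
    simp [Matrix.mul_add, Matrix.add_mul, Matrix.trace_add, add_div, add_smul]
    abel
  map_smul' := by
    intro c a
    apply Subtype.ext
    simp [Matrix.mul_smul, Matrix.smul_mul, Matrix.trace_smul, smul_smul, mul_div_assoc,
      smul_sub]

noncomputable def sl2Equiv : sl2 ≃ₗ[ℂ] (Fin 3 → ℂ) where
  toFun X := ![X.1 0 0, X.1 0 1, X.1 1 0]
  invFun v := ⟨!![v 0, v 1; v 2, -(v 0)], by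
    show Matrix.trace _ = 0
    simp [Matrix.trace_fin_two]⟩
  map_add' a b := by
    funext i
    fin_cases i <;> simp
  map_smul' c a := by
    funext i
    fin_cases i <;> simp
  left_inv X := by
    apply Subtype.ext
    have h : X.1 0 0 + X.1 1 1 = 0 := by
      have h' : X.1.trace = 0 := X.2
      rwa [Matrix.trace_fin_two] at h'
    ext i j
    fin_cases i <;> fin_cases j <;> simp <;> linear_combination -h
  right_inv v := by
    funext i
    fin_cases i <;> simp

/-- For `A, B ∈ M₂(ℂ)`, the trace of the endomorphism `ξ ↦ AξB − (tr(AξB)/2)·I` of the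
3-dimensional space `sl₂(ℂ)` equals `tr(A)·tr(B) − ½·tr(AB)`. -/
theorem trace_tracelessConj (A B : Matrix (Fin 2) (Fin 2) ℂ) :
    LinearMap.trace ℂ sl2 (tracelessConj A B) = A.trace * B.trace - (A * B).trace / 2 := by
  rw [LinearMap.trace_eq_matrix_trace ℂ (Module.Basis.ofEquivFun sl2Equiv)]
  rw [Matrix.trace]
  simp only [Matrix.diag, LinearMap.toMatrix_apply, Module.Basis.ofEquivFun_repr_apply,
    Module.Basis.coe_ofEquivFun, Fin.sum_univ_three]
  simp [tracelessConj, sl2Equiv, Matrix.mul_apply, Matrix.trace_fin_two, Fin.sum_univ_two,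
    Matrix.one_apply]
  ring
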